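/- Let (Ω, 𝒜, μ) and (𝒳, ℬ, P) be probability spaces, let θ : 𝒳 × Ω → ℝ be jointly measurable, and let γ ∈ ℝ. Define g(x, ω) = 1{θ(x, ω) ≤ γ}, the estimator p̂(ω) = ∫_𝒳 g(x, ω) dP(x), the pointwise posterior probability p(x) = μ{ω : θ(x, ω) ≤ γ}, and the point-variance function h(x) = p(x)(1 − p(x)). Then Var_μ(p̂) ≤ ∫_𝒳 h(x) dP(x). -/

import Mathlib

open MeasureTheory ProbabilityTheory

/-- Proposition 1: the variance of the Bayesian rate estimator
`p̂(ω) = ∫ 1{θ(x,ω) ≤ γ} dP(x)` is bounded by the average point variance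
`∫ p(x)(1 - p(x)) dP(x)`, where `p(x) = μ{ω : θ(x,ω) ≤ γ}`. -/
theorem variance_rate_estimator_le_avg_point_variance
    {Ω 𝒳 : Type*} [MeasurableSpace Ω] [MeasurableSpace 𝒳]
    (μ : Measure Ω) (P : Measure 𝒳) [IsProbabilityMeasure μ] [IsProbabilityMeasure P]
    (θ : 𝒳 × Ω → ℝ) (hθ : Measurable θ) (γ : ℝ)
    (g : 𝒳 → Ω → ℝ) (hg : ∀ x ω, g x ω = if θ (x, ω) ≤ γ then 1 else 0)
    (phat : Ω → ℝ) (hphat : ∀ ω, phat ω = ∫ x, g x ω ∂P)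
    (p : 𝒳 → ℝ) (hp : ∀ x, p x = (μ {ω | θ (x, ω) ≤ γ}).toReal)
    (h : 𝒳 → ℝ) (hh : ∀ x, h x = p x * (1 - p x)) :
    variance phat μ ≤ ∫ x, h x ∂P := by
  classical
  have hSmeas : MeasurableSet {q : 𝒳 × Ω | θ q ≤ γ} := measurableSet_le hθ measurable_const
  -- the indicator as a function on the product
  set F : 𝒳 × Ω → ℝ := fun q => if θ q ≤ γ then 1 else 0 with hFdef
  have hFmeas : Measurable F := Measurable.ite hSmeas measurable_const measurable_const
  have hgF : ∀ x ω, g x ω = F (x, ω) := fun x ω => hg x ω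
  have hFmem : ∀ q, F q ∈ Set.Icc (0:ℝ) 1 := by
    intro q; by_cases hq : θ q ≤ γ <;> simp [F, hq]
  -- p is measurable and in [0,1]
  have hslice : ∀ x : 𝒳, {ω | θ (x, ω) ≤ γ} = Prod.mk x ⁻¹' {q : 𝒳 × Ω | θ q ≤ γ} := by
    intro x; rfl
  have hpmeas : Measurable p := by
    have h1 : Measurable fun x => μ (Prod.mk x ⁻¹' {q : 𝒳 × Ω | θ q ≤ γ}) :=
      measurable_measure_prodMk_left hSmeas
    have : p = fun x => (μ (Prod.mk x ⁻¹' {q : 𝒳 × Ω | θ q ≤ γ})).toReal := by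
      funext x; rw [hp x, hslice x]
    rw [this]; exact h1.ennreal_toReal
  have hpmem : ∀ x, p x ∈ Set.Icc (0:ℝ) 1 := by
    intro x
    rw [hp x]
    constructor
    · exact ENNReal.toReal_nonneg
    · exact ENNReal.toReal_le_of_le_ofReal zero_le_one (by simpa using prob_le_one)
  -- ∫ g x ω dμ = p x
  have hgint : ∀ x, ∫ ω, g x ω ∂μ = p x := by
    intro x
    have hsm : MeasurableSet {ω | θ (x, ω) ≤ γ} := by
      rw [hslice x]; exact hSmeas.preimage (measurable_prodMk_left)
    have : (fun ω => g x ω) = Set.indicator {ω | θ (x, ω) ≤ γ} 1 := by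
      funext ω; rw [hg x ω, Set.indicator_apply]; by_cases hq : θ (x, ω) ≤ γ <;> simp [hq]
    rw [this, integral_indicator_one hsm, hp x]; rfl
  -- measurability of g in each variable
  have hgmeasx : ∀ ω, Measurable fun x => g x ω := by
    intro ω
    have : (fun x => g x ω) = F ∘ (fun x => (x, ω)) := by funext x; rw [hgF]; rfl
    rw [this]; exact hFmeas.comp (measurable_id.prodMk measurable_const)
  have hgmeasω : ∀ x, Measurable fun ω => g x ω := by
    intro x
    have : (fun ω => g x ω) = F ∘ (Prod.mk x) := by funext ω; rw [hgF]; rfl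
    rw [this]; exact hFmeas.comp measurable_prodMk_left
  -- integrability of g(·, ω) over P
  have hgintP : ∀ ω, Integrable (fun x => g x ω) P := by
    intro ω
    refine (integrable_const (1:ℝ)).mono' (hgmeasx ω).aestronglyMeasurable ?_
    filter_upwards with x
    rw [hgF, Real.norm_eq_abs, abs_le]
    exact ⟨by linarith [(hFmem (x, ω)).1], (hFmem (x, ω)).2⟩
  have hpintP : Integrable p P := by
    refine (integrable_const (1:ℝ)).mono' hpmeas.aestronglyMeasurable ?_
    filter_upwards with x
    rw [Real.norm_eq_abs, abs_le]
    exact ⟨by linarith [(hpmem x).1], (hpmem x).2⟩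
  set m := ∫ x, p x ∂P with hm
  -- G = (g - p)^2 on product
  set G : 𝒳 × Ω → ℝ := fun q => (F q - p q.1) ^ 2 with hGdef
  have hGmeas : Measurable G := ((hFmeas.sub (hpmeas.comp measurable_fst)).pow measurable_const)
  have hGmem : ∀ q, G q ∈ Set.Icc (0:ℝ) 1 := by
    intro q
    have h1 := hFmem q; have h2 := hpmem q.1
    constructor
    · positivity
    · have : |F q - p q.1| ≤ 1 := by
        rw [abs_le]; constructor <;> [skip; skip] <;> cases h1 <;> cases h2 <;> linarith
      calc G q = |F q - p q.1| ^ 2 := by rw [sq_abs]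
        _ ≤ 1 ^ 2 := by apply pow_le_pow_left₀ (abs_nonneg _) this
        _ = 1 := one_pow 2
  have hGintProd : Integrable G (P.prod μ) := by
    refine (integrable_const (1:ℝ)).mono' hGmeas.aestronglyMeasurable ?_
    filter_upwards with q
    rw [Real.norm_eq_abs, abs_le]
    exact ⟨by linarith [(hGmem q).1], (hGmem q).2⟩
  -- inner integral over ω of G equals h
  have hinner : ∀ x, ∫ ω, G (x, ω) ∂μ = h x := by
    intro x
    have hgi : Integrable (fun ω => g x ω) μ := by
      refine (integrable_const (1:ℝ)).mono' (hgmeasω x).aestronglyMeasurable ?_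
      filter_upwards with ω
      rw [hgF, Real.norm_eq_abs, abs_le]
      exact ⟨by linarith [(hFmem (x, ω)).1], (hFmem (x, ω)).2⟩
    have hexp : ∀ ω, G (x, ω) = g x ω * (1 - 2 * p x) + (p x) ^ 2 := by
      intro ω
      have hsq : g x ω ^ 2 = g x ω := by rw [hg x ω]; by_cases hq : θ (x, ω) ≤ γ <;> simp [hq]
      have : G (x, ω) = g x ω ^ 2 - 2 * p x * g x ω + p x ^ 2 := by
        simp only [G, ← hgF x ω]; ring
      rw [this, hsq]; ring
    calc ∫ ω, G (x, ω) ∂μ = ∫ ω, (g x ω * (1 - 2 * p x) + (p x) ^ 2) ∂μ := by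
          congr 1; funext ω; exact hexp ω
      _ = (∫ ω, g x ω * (1 - 2 * p x) ∂μ) + ∫ ω, ((p x) ^ 2 : ℝ) ∂μ :=
          integral_add (hgi.mul_const _) (integrable_const _)
      _ = (∫ ω, g x ω ∂μ) * (1 - 2 * p x) + (p x) ^ 2 := by
          rw [integral_mul_const, integral_const]; simp
      _ = h x := by rw [hgint x, hh x]; ring
  -- phat properties
  have hphat_mem : ∀ ω, phat ω ∈ Set.Icc (0:ℝ) 1 := by
    intro ω
    rw [hphat ω]
    constructor
    · exact integral_nonneg fun x => by rw [hgF]; exact (hFmem (x, ω)).1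
    · calc ∫ x, g x ω ∂P ≤ ∫ _x, (1:ℝ) ∂P :=
            integral_mono (hgintP ω) (integrable_const 1) fun x => by
              rw [hgF]; exact (hFmem (x, ω)).2
        _ = 1 := by simp
  have hphatmeas : Measurable phat := by
    have : phat = fun ω => ∫ x, F (x, ω) ∂P := by
      funext ω; rw [hphat ω]; congr 1; funext x; rw [hgF]
    rw [this]
    exact (hFmeas.stronglyMeasurable.integral_prod_left (f := fun x ω => F (x, ω))).measurable
  have hphatℒ2 : MemLp phat 2 μ := memLp_of_bounded (ae_of_all _ hphat_mem) hphatmeas.aestronglyMeasurable 2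
  -- E[phat] = m  via Fubini
  have hFintProd : Integrable F (P.prod μ) := by
    refine (integrable_const (1:ℝ)).mono' hFmeas.aestronglyMeasurable ?_
    filter_upwards with q
    rw [Real.norm_eq_abs, abs_le]
    exact ⟨by linarith [(hFmem q).1], (hFmem q).2⟩
  have hmean : ∫ ω, phat ω ∂μ = m := by
    have hswap := integral_integral_swap (f := fun x ω => F (x, ω)) hFintProd
    calc ∫ ω, phat ω ∂μ = ∫ ω, ∫ x, F (x, ω) ∂P ∂μ := by
          congr 1; funext ω; rw [hphat ω]; congr 1; funext x; rw [hgF]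
      _ = ∫ x, ∫ ω, F (x, ω) ∂μ ∂P := hswap.symm
      _ = ∫ x, p x ∂P := by
          congr 1; funext x
          rw [← hgint x]; congr 1; funext ω; rw [hgF]
  -- pointwise Jensen
  have hjensen : ∀ ω, (phat ω - m) ^ 2 ≤ ∫ x, G (x, ω) ∂P := by
    intro ω
    set f : 𝒳 → ℝ := fun x => g x ω - p x with hfdef
    have hfmeas : Measurable f := (hgmeasx ω).sub hpmeas
    have hfmem : ∀ x, f x ∈ Set.Icc (-1:ℝ) 1 := by
      intro x
      have h1 := hFmem (x, ω); have h2 := hpmem x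
      have hfx : f x = F (x, ω) - p x := by simp only [f]; rw [hgF]
      rw [hfx]
      exact ⟨by linarith [h1.1, h2.2], by linarith [h1.2, h2.1]⟩
    have hfℒ2 : MemLp f 2 P := memLp_of_bounded (ae_of_all _ hfmem) hfmeas.aestronglyMeasurable 2
    have hvar := variance_nonneg f P
    rw [variance_eq_sub hfℒ2] at hvar
    have h1 : ∫ x, f x ∂P = phat ω - m := by
      rw [hfdef]
      rw [integral_sub (hgintP ω) hpintP, hphat ω, hm]
    have h2 : (∫ x, (f ^ 2) x ∂P) = ∫ x, G (x, ω) ∂P := by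
      congr 1; funext x; simp only [Pi.pow_apply, f, G, hgF]
    rw [h1, h2] at hvar
    linarith
  -- put it together
  have hGright : Integrable (fun ω => ∫ x, G (x, ω) ∂P) μ := hGintProd.integral_prod_right
  have hlhs_int : Integrable (fun ω => (phat ω - m) ^ 2) μ :=
    ((hphatℒ2.sub (memLp_const m)).integrable_sq).congr (by filter_upwards with ω; simp)
  have hv : variance phat μ = ∫ ω, (phat ω - m) ^ 2 ∂μ := by
    rw [variance_eq_integral hphatℒ2.aemeasurable]
    congr 1
    funext ω
    simp [Pi.pow_apply, Pi.sub_apply, hmean]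
  calc variance phat μ = ∫ ω, (phat ω - m) ^ 2 ∂μ := hv
    _ ≤ ∫ ω, ∫ x, G (x, ω) ∂P ∂μ := integral_mono hlhs_int hGright hjensen
    _ = ∫ x, ∫ ω, G (x, ω) ∂μ ∂P := (integral_integral_swap (f := fun x ω => G (x, ω)) hGintProd).symm
    _ = ∫ x, h x ∂P := by congr 1; funext x; exact hinner x
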